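/- In the C_n^{(1)} perfect crystal B of level l, with indices i_a = a-1 for 1 ≤ a ≤ n+1 and i_a = 2n+1-a for n+2 ≤ a ≤ 2n, the extremal elements defined by b_0 = (0,...,0) and b_a = f_{i_a}^{φ_{i_a}(b_{a-1})} b_{a-1} are: b_a = (0,...,0,2l,0,...,0) with 2l in position x_a for 1 ≤ a ≤ n, and b_{n+a} = (0,...,0,2l,0,...,0) with 2l in position \bar{x}_{n-a+1} for 1 ≤ a ≤ n. -/

import Mathlib

/- The perfect crystal B of level l for C_n^{(1)}:
   elements (x_1,…,x_n,x̄_n,…,x̄_1) with x_i, x̄_i ≥ 0,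
   Σ(x_i + x̄_i) ≤ 2l and Σ(x_i + x̄_i) even. -/
structure CElt where
  x : ℕ → ℤ
  xb : ℕ → ℤ

namespace CElt

def sumC (n : ℕ) (b : CElt) : ℤ := ∑ i ∈ Finset.Icc 1 n, (b.x i + b.xb i)

/-- membership in the level `l` perfect crystal `B` for `C_n^{(1)}` -/
def mem (n l : ℕ) (b : CElt) : Prop :=
  (∀ i, 0 ≤ b.x i) ∧ (∀ i, 0 ≤ b.xb i) ∧
  (∀ i, i = 0 ∨ n < i → b.x i = 0 ∧ b.xb i = 0) ∧
  sumC n b ≤ 2 * l ∧ Even (sumC n b)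

/-- the Kashiwara operator `f_0` (three cases) -/
def f0 (b : CElt) : CElt :=
  if b.xb 1 ≤ b.x 1 then ⟨Function.update b.x 1 (b.x 1 + 2), b.xb⟩
  else if b.x 1 = b.xb 1 - 1 then
    ⟨Function.update b.x 1 (b.x 1 + 1), Function.update b.xb 1 (b.xb 1 - 1)⟩
  else ⟨b.x, Function.update b.xb 1 (b.xb 1 - 2)⟩

/-- the Kashiwara operator `f_i`, `1 ≤ i ≤ n-1` -/
def fmid (i : ℕ) (b : CElt) : CElt :=
  if b.xb (i+1) ≤ b.x (i+1) then
    ⟨Function.update (Function.update b.x i (b.x i - 1)) (i+1) (b.x (i+1) + 1), b.xb⟩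
  else
    ⟨b.x, Function.update (Function.update b.xb (i+1) (b.xb (i+1) - 1)) i (b.xb i + 1)⟩

/-- the Kashiwara operator `f_n` -/
def flast (n : ℕ) (b : CElt) : CElt :=
  ⟨Function.update b.x n (b.x n - 1), Function.update b.xb n (b.xb n + 1)⟩

/-- the Kashiwara operator `f_i`, `0 ≤ i ≤ n` -/
def f (n i : ℕ) (b : CElt) : CElt :=
  if i = 0 then f0 b else if i = n then flast n b else fmid i b

/-- `φ_i(b)`; `f_i b` is defined exactly when `φ_i(b) > 0` -/
def phi (n l i : ℕ) (b : CElt) : ℤ :=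
  if i = 0 then (l : ℤ) - sumC n b / 2 + max (b.xb 1 - b.x 1) 0
  else if i = n then b.x n
  else b.x i + max (b.xb (i+1) - b.x (i+1)) 0

end CElt

namespace CElt

/-- the index sequence `i_a = a-1` for `1 ≤ a ≤ n+1`, `i_a = 2n+1-a` for
`n+2 ≤ a ≤ 2n` -/
def idx (n a : ℕ) : ℕ := if a ≤ n + 1 then a - 1 else 2 * n + 1 - a

/-- the ground-state element `(0,…,0)` -/
def bzero : CElt := ⟨fun _ => 0, fun _ => 0⟩

/-- element with `2l` in position `x_p`, zeros elsewhere -/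
def unitX (l p : ℕ) : CElt := ⟨fun i => if i = p then 2 * (l : ℤ) else 0, fun _ => 0⟩

/-- element with `2l` in position `x̄_p`, zeros elsewhere -/
def unitXb (l p : ℕ) : CElt := ⟨fun _ => 0, fun i => if i = p then 2 * (l : ℤ) else 0⟩

/-- the extremal elements `b_0 = (0,…,0)`, `b_a = f_{i_a}^{φ_{i_a}(b_{a-1})} b_{a-1}` -/
def bseq (n l : ℕ) : ℕ → CElt
  | 0 => bzero
  | a + 1 => (f n (idx n (a+1)))^[(phi n l (idx n (a+1)) (bseq n l a)).toNat] (bseq n l a)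

end CElt

namespace CElt

lemma mk_eq {x x' xb xb' : ℕ → ℤ} (h1 : ∀ i, x i = x' i) (h2 : ∀ i, xb i = xb' i) :
    (⟨x, xb⟩ : CElt) = ⟨x', xb'⟩ := by
  rw [show x = x' from funext h1, show xb = xb' from funext h2]

/-- state for f0 iteration -/
def zrX (j : ℤ) : CElt := ⟨fun k => if k = 1 then j else 0, fun _ => 0⟩

lemma f0_zrX (j : ℤ) (hj : 0 ≤ j) : f0 (zrX j) = zrX (j + 2) := by
  unfold f0 zrX
  rw [if_pos (by simpa using hj)]
  exact mk_eq (fun i => by simp [Function.update_apply]; split_ifs <;> simp) (fun i => rfl)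

lemma f0_iter (k : ℕ) : f0^[k] bzero = zrX (2 * k) := by
  induction k with
  | zero => exact mk_eq (fun i => by simp [bzero, zrX]) (fun i => rfl)
  | succ k ih =>
    rw [Function.iterate_succ_apply', ih, f0_zrX _ (by positivity)]
    unfold zrX
    exact mk_eq (fun i => by push_cast; ring_nf) (fun i => rfl)

/-- state for fmid iteration on x side -/
def midX (l : ℤ) (i : ℕ) (j : ℤ) : CElt :=
  ⟨fun k => if k = i + 1 then j else if k = i then 2 * l - j else 0, fun _ => 0⟩

lemma fmid_midX (l : ℤ) (i : ℕ) (j : ℤ) (hj : 0 ≤ j) :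
    fmid i (midX l i j) = midX l i (j + 1) := by
  unfold fmid midX
  rw [if_pos (by simpa using hj)]
  refine mk_eq (fun k => ?_) (fun k => rfl)
  simp only [Function.update_apply]
  split_ifs <;> omega

lemma fmid_iterX (l : ℤ) (i : ℕ) (k : ℕ) :
    (fmid i)^[k] (midX l i 0) = midX l i k := by
  induction k with
  | zero => rfl
  | succ k ih =>
    rw [Function.iterate_succ_apply', ih, fmid_midX _ _ _ (by positivity)]
    push_cast; rfl

/-- state for fmid iteration on xb side -/
def midXb (l : ℤ) (i : ℕ) (j : ℤ) : CElt :=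
  ⟨fun _ => 0, fun k => if k = i then j else if k = i + 1 then 2 * l - j else 0⟩

lemma fmid_midXb (l : ℤ) (i : ℕ) (j : ℤ) (hj : j < 2 * l) :
    fmid i (midXb l i j) = midXb l i (j + 1) := by
  unfold fmid midXb
  rw [if_neg (by simp; omega)]
  refine mk_eq (fun k => rfl) (fun k => ?_)
  simp only [Function.update_apply]
  split_ifs <;> omega

lemma fmid_iterXb (l : ℤ) (i : ℕ) (k : ℕ) (hk : (k : ℤ) ≤ 2 * l) :
    (fmid i)^[k] (midXb l i 0) = midXb l i k := by
  induction k with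
  | zero => rfl
  | succ k ih =>
    rw [Function.iterate_succ_apply', ih (by push_cast at hk ⊢; omega),
      fmid_midXb _ _ _ (by push_cast at hk; omega)]
    push_cast; rfl

/-- state for flast iteration -/
def lastSt (l : ℤ) (n : ℕ) (j : ℤ) : CElt :=
  ⟨fun k => if k = n then 2 * l - j else 0, fun k => if k = n then j else 0⟩

lemma flast_lastSt (l : ℤ) (n : ℕ) (j : ℤ) :
    flast n (lastSt l n j) = lastSt l n (j + 1) := by
  unfold flast lastSt
  refine mk_eq (fun k => ?_) (fun k => ?_) <;>
    · simp only [Function.update_apply]; split_ifs <;> omega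

lemma flast_iter (l : ℤ) (n : ℕ) (k : ℕ) :
    (flast n)^[k] (lastSt l n 0) = lastSt l n k := by
  induction k with
  | zero => rfl
  | succ k ih =>
    rw [Function.iterate_succ_apply', ih, flast_lastSt]
    push_cast; rfl

lemma part1 (n l : ℕ) (hn : 2 ≤ n) :
    ∀ a, 1 ≤ a → a ≤ n → bseq n l a = unitX l a := by
  intro a
  induction a with
  | zero => omega
  | succ a ih =>
    intro _ ha
    rcases Nat.eq_zero_or_pos a with rfl | ha1
    · -- a + 1 = 1
      rw [bseq]
      have hidx : idx n 1 = 0 := by simp [idx]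
      have hphi : phi n l 0 (bseq n l 0) = (l : ℤ) := by
        simp [phi, bseq, bzero, sumC]
      rw [hidx, hphi]
      have hf : f n 0 = f0 := by funext b; simp [f]
      rw [Int.toNat_natCast, hf, show bseq n l 0 = bzero from rfl, f0_iter]
      exact mk_eq (fun i => rfl) (fun i => rfl)
    · rw [bseq, ih ha1 (by omega)]
      have hidx : idx n (a + 1) = a := by simp [idx]; omega
      have hfa : f n a = fmid a := by
        funext b; simp [f, show a ≠ 0 by omega, show a ≠ n by omega]
      have hphi : phi n l a (unitX l a) = 2 * l := by
        simp [phi, unitX, show a ≠ 0 by omega, show a ≠ n by omega,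
          show ¬ (a + 1 = a) by omega]
      have hstart : unitX l a = midX l a 0 := by
        refine mk_eq (fun k => ?_) (fun k => rfl)
        split_ifs <;> omega
      rw [hidx, hphi, hfa, hstart]
      rw [show ((2 * (l:ℤ)).toNat) = 2 * l by omega, fmid_iterX]
      refine mk_eq (fun k => ?_) (fun k => rfl)
      split_ifs <;> omega
  

end CElt

namespace CElt

lemma part2 (n l : ℕ) (hn : 2 ≤ n) (hl : 1 ≤ l) :
    ∀ a, 1 ≤ a → a ≤ n → bseq n l (n + a) = unitXb l (n - a + 1) := by
  intro a
  induction a with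
  | zero => omega
  | succ a ih =>
    intro _ ha
    rcases Nat.eq_zero_or_pos a with rfl | ha1
    · rw [bseq, part1 n l hn n (by omega) le_rfl]
      have hidx : idx n (n + 1) = n := by simp [idx]
      have hphi : phi n l n (unitX l n) = 2 * l := by
        simp [phi, unitX, show n ≠ 0 by omega]
      have hfn : f n n = flast n := by
        funext b; simp [f, show n ≠ 0 by omega]
      have hstart : unitX l n = lastSt l n 0 := by
        refine mk_eq (fun k => ?_) (fun k => ?_) <;>
          · split_ifs <;> omega
      rw [hidx, hphi, hfn, hstart,
        show ((2 * (l:ℤ)).toNat) = 2 * l by omega, flast_iter]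
      refine mk_eq (fun k => ?_) (fun k => ?_) <;>
        · split_ifs <;> omega
    · rw [show n + (a + 1) = (n + a) + 1 by omega, bseq, ih ha1 (by omega)]
      have hidx : idx n (n + a + 1) = n - a := by
        simp [idx, show ¬ (n + a + 1 ≤ n + 1) by omega]; omega
      have h0 : n - a ≠ 0 := by omega
      have hn' : n - a ≠ n := by omega
      have hphi : phi n l (n - a) (unitXb l (n - a + 1)) = 2 * l := by
        simp [phi, unitXb, h0, hn']
      have hfa : f n (n - a) = fmid (n - a) := by
        funext b; simp [f, h0, hn']
      have hstart : unitXb l (n - a + 1) = midXb l (n - a) 0 := by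
        refine mk_eq (fun k => rfl) (fun k => ?_)
        split_ifs <;> omega
      rw [hidx, hphi, hfa, hstart,
        show ((2 * (l:ℤ)).toNat) = 2 * l by omega,
        fmid_iterXb _ _ _ (by push_cast; omega)]
      refine mk_eq (fun k => rfl) (fun k => ?_)
      split_ifs <;> omega

end CElt

/-- in the `C_n^{(1)}` perfect crystal of level `l`, the extremal
elements are `b_a = (0,…,0,2l,0,…,0)` with `2l` in position `x_a` for
`1 ≤ a ≤ n`, and `b_{n+a} = (0,…,0,2l,0,…,0)` with `2l` in position
`x̄_{n-a+1}` for `1 ≤ a ≤ n`. -/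
theorem Cn1_extremal_elements (n l : ℕ) (hn : 2 ≤ n) (hl : 1 ≤ l) :
    (∀ a, 1 ≤ a → a ≤ n → CElt.bseq n l a = CElt.unitX l a) ∧
    (∀ a, 1 ≤ a → a ≤ n → CElt.bseq n l (n + a) = CElt.unitXb l (n - a + 1)) := by
  exact ⟨CElt.part1 n l hn, CElt.part2 n l hn hl⟩
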